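/- Let Λ be a commutative unital ring and C a small category. A morphism f of unbounded chain complexes of presheaves of Λ-modules on C is a degreewise epimorphism and a quasi-isomorphism if and only if f has the right lifting property with respect to the set I' of morphisms ∂ΔⁿΛ(c) → ΔⁿΛ(c) for all n ∈ ℤ and c ∈ C, where ∂ΔⁿΛ(c) → ΔⁿΛ(c) is the identity of Λ(c) ⊕ Λ(c) in degree n−1. -/

import Mathlib

open CategoryTheory CategoryTheory.Limits ZeroObject

universe v u

variable {A : Type u} [Category.{v} A] [Abelian A]


/-- The graded object underlying the two-term complex. -/
noncomputable def twoTermX (F G : A) (n i : ℤ) : A :=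
  if i = n then F else if i = n - 1 then G else 0

lemma twoTermX_self (F G : A) (n : ℤ) : twoTermX F G n n = F := if_pos rfl

lemma twoTermX_pred (F G : A) (n : ℤ) : twoTermX F G n (n - 1) = G := by
  unfold twoTermX
  rw [if_neg (by omega), if_pos rfl]

/-- The differential of the two-term complex. -/
noncomputable def twoTermD {F G : A} (φ : F ⟶ G) (n i j : ℤ) :
    twoTermX F G n i ⟶ twoTermX F G n j :=
  if h : i = n ∧ j = n - 1 then
    eqToHom (by rw [h.1]; exact twoTermX_self F G n) ≫ φ ≫
      eqToHom (by rw [h.2]; exact (twoTermX_pred F G n).symm)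
  else 0

lemma twoTermD_self {F G : A} (φ : F ⟶ G) (n : ℤ) :
    twoTermD φ n n (n - 1) =
      eqToHom (twoTermX_self F G n) ≫ φ ≫ eqToHom (twoTermX_pred F G n).symm :=
  dif_pos ⟨rfl, rfl⟩

lemma twoTermD_eq_zero {F G : A} (φ : F ⟶ G) {n i j : ℤ} (h : ¬(i = n ∧ j = n - 1)) :
    twoTermD φ n i j = 0 := dif_neg h

/-- The chain complex with `F` in degree `n`, `G` in degree `n-1`, differential `φ`
from degree `n` to degree `n-1`, and `0` elsewhere. -/
noncomputable def twoTerm {F G : A} (φ : F ⟶ G) (n : ℤ) : ChainComplex A ℤ where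
  X := twoTermX F G n
  d := twoTermD φ n
  shape i j hij := by
    apply twoTermD_eq_zero
    rintro ⟨rfl, rfl⟩
    exact hij (by simp)
  d_comp_d' i j k hij hjk := by
    simp only [ComplexShape.down_Rel] at hij hjk
    by_cases h : i = n ∧ j = n - 1
    · obtain ⟨h1, h2⟩ := h
      rw [twoTermD_eq_zero φ (i := j) (j := k) (by rintro ⟨h3, -⟩; omega), comp_zero]
    · rw [twoTermD_eq_zero φ h, zero_comp]

/-- The degreewise components of a morphism of two-term complexes. -/
noncomputable def twoTermMapF {F G F' G' : A} (a : F ⟶ F') (b : G ⟶ G') (n i : ℤ) :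
    twoTermX F G n i ⟶ twoTermX F' G' n i :=
  if h : i = n then
    eqToHom (by rw [h]; exact twoTermX_self F G n) ≫ a ≫
      eqToHom (by rw [h]; exact (twoTermX_self F' G' n).symm)
  else if h' : i = n - 1 then
    eqToHom (by rw [h']; exact twoTermX_pred F G n) ≫ b ≫
      eqToHom (by rw [h']; exact (twoTermX_pred F' G' n).symm)
  else 0

lemma twoTermMapF_self {F G F' G' : A} (a : F ⟶ F') (b : G ⟶ G') (n : ℤ) :
    twoTermMapF (G := G) (G' := G') a b n n =
      eqToHom (twoTermX_self F G n) ≫ a ≫ eqToHom (twoTermX_self F' G' n).symm :=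
  dif_pos rfl

lemma twoTermMapF_pred {F G F' G' : A} (a : F ⟶ F') (b : G ⟶ G') (n : ℤ) :
    twoTermMapF (F := F) (F' := F') a b n (n - 1) =
      eqToHom (twoTermX_pred F G n) ≫ b ≫ eqToHom (twoTermX_pred F' G' n).symm := by
  unfold twoTermMapF
  rw [dif_neg (by omega), dif_pos rfl]

/-- A morphism of two-term complexes induced by a compatible pair of morphisms. -/
noncomputable def twoTermMap {F G F' G' : A} (φ : F ⟶ G) (φ' : F' ⟶ G')
    (a : F ⟶ F') (b : G ⟶ G') (w : φ ≫ b = a ≫ φ') (n : ℤ) :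
    twoTerm φ n ⟶ twoTerm φ' n where
  f := twoTermMapF a b n
  comm' i j hij := by
    simp only [ComplexShape.down_Rel] at hij
    show twoTermMapF a b n i ≫ twoTermD φ' n i j = twoTermD φ n i j ≫ twoTermMapF a b n j
    by_cases h1 : i = n
    · obtain rfl : j = n - 1 := by omega
      obtain rfl : i = n := h1
      rw [twoTermMapF_self, twoTermMapF_pred, twoTermD_self, twoTermD_self]
      simp only [Category.assoc, eqToHom_trans, eqToHom_trans_assoc, eqToHom_refl,
        Category.id_comp, Category.comp_id]
      slice_lhs 2 3 => rw [← w]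
      simp only [Category.assoc]
    · rw [twoTermD_eq_zero φ' (by rintro ⟨h3, -⟩; exact h1 h3),
        twoTermD_eq_zero φ (by rintro ⟨h3, -⟩; exact h1 h3), zero_comp, comp_zero]

/-- The category of presheaves of `Λ`-modules on a small category `C`. -/
abbrev PSh (Λ : Type u) [CommRing Λ] (C : Type u) [SmallCategory C] :=
  Cᵒᵖ ⥤ ModuleCat.{u} Λ

variable (Λ : Type u) [CommRing Λ] (C : Type u) [SmallCategory C]

/-- `Λ(c)`, the free presheaf of `Λ`-modules on the presheaf represented by `c`. -/
noncomputable def representableΛ (c : C) : PSh Λ C := yoneda.obj c ⋙ ModuleCat.free Λ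

/-- The canonical morphism `∂ΔⁿF ⟶ ΔⁿF` which is the identity of `F ⊞ F` in degree
`n-1`.  Here `ΔⁿF` is the complex with `F` in degree `n`, `F ⊞ F` in degree `n-1`
and differential `id × (-id)`, and `∂ΔⁿF` is the complex with `F ⊞ F` in degree
`n-1` and zero elsewhere. -/
noncomputable def boundaryToSimplex {F : A} (n : ℤ) :
    twoTerm (0 : (0 : A) ⟶ F ⊞ F) n ⟶ twoTerm (biprod.lift (𝟙 F) (-𝟙 F)) n :=
  twoTermMap _ _ 0 (𝟙 (F ⊞ F)) (by simp) n

section TwoTermHomAPI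

variable {F G : A} {φ : F ⟶ G} {n : ℤ} {K K' : ChainComplex A ℤ}

lemma twoTermX_isZero (F G : A) {n i : ℤ} (h1 : i ≠ n) (h2 : i ≠ n - 1) :
    IsZero (twoTermX F G n i) := by
  rw [twoTermX, if_neg h1, if_neg h2]
  exact isZero_zero A

/-- helper : rewriting the second index of a differential -/
lemma d_index_congr (K : ChainComplex A ℤ) {i j j' : ℤ} (h : j = j')
    {X : A} (z : X ⟶ K.X i) : z ≫ K.d i j = 0 ↔ z ≫ K.d i j' = 0 := by
  subst h; rfl

noncomputable def twoTermHomMkF (φ : F ⟶ G) (n : ℤ) (K : ChainComplex A ℤ)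
    (v : F ⟶ K.X n) (w : G ⟶ K.X (n - 1)) (i : ℤ) : twoTermX F G n i ⟶ K.X i :=
  if h : i = n then
    eqToHom (by rw [h]; exact twoTermX_self F G n) ≫ v ≫ eqToHom (by rw [h])
  else if h' : i = n - 1 then
    eqToHom (by rw [h']; exact twoTermX_pred F G n) ≫ w ≫ eqToHom (by rw [h'])
  else 0

lemma twoTermHomMkF_self (φ : F ⟶ G) (n : ℤ) (K : ChainComplex A ℤ)
    (v : F ⟶ K.X n) (w : G ⟶ K.X (n - 1)) :
    twoTermHomMkF φ n K v w n = eqToHom (twoTermX_self F G n) ≫ v := by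
  rw [twoTermHomMkF, dif_pos rfl]
  simp

lemma twoTermHomMkF_pred (φ : F ⟶ G) (n : ℤ) (K : ChainComplex A ℤ)
    (v : F ⟶ K.X n) (w : G ⟶ K.X (n - 1)) :
    twoTermHomMkF φ n K v w (n - 1) = eqToHom (twoTermX_pred F G n) ≫ w := by
  rw [twoTermHomMkF, dif_neg (by omega : ¬ (n:ℤ) - 1 = n), dif_pos rfl]
  simp

lemma twoTermHomMkF_zero (φ : F ⟶ G) (n : ℤ) (K : ChainComplex A ℤ)
    (v : F ⟶ K.X n) (w : G ⟶ K.X (n - 1)) {i : ℤ} (h : i ≠ n) (h' : i ≠ n - 1) :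
    twoTermHomMkF φ n K v w i = 0 := by
  rw [twoTermHomMkF, dif_neg h, dif_neg h']

noncomputable def twoTermHomMk (φ : F ⟶ G) (n : ℤ) (K : ChainComplex A ℤ)
    (v : F ⟶ K.X n) (w : G ⟶ K.X (n - 1))
    (hw : w ≫ K.d (n - 1) (n - 2) = 0)
    (hv : v ≫ K.d n (n - 1) = φ ≫ w) :
    twoTerm φ n ⟶ K where
  f := twoTermHomMkF φ n K v w
  comm' i j hij := by
    simp only [ComplexShape.down_Rel] at hij
    by_cases h : i = n
    · obtain rfl : n = i := h.symm
      obtain rfl : j = n - 1 := by omega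
      rw [twoTermHomMkF_self, twoTermHomMkF_pred]
      show _ = twoTermD φ n n (n-1) ≫ _
      rw [twoTermD_self]
      simp [hv]
      erw [Category.assoc, hv]
      rfl
    · by_cases h' : i = n - 1
      · obtain rfl : j = i - 1 := by omega
        obtain rfl : n - 1 = i := h'.symm
        rw [twoTermHomMkF_pred]
        show _ = twoTermD φ n (n-1) (n-1-1) ≫ _
        rw [twoTermD_eq_zero φ (by omega), zero_comp]
        have hw' : w ≫ K.d (n - 1) (n - 1 - 1) = 0 :=
          (d_index_congr K (by omega) w).2 hw
        erw [Category.assoc, hw', comp_zero]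
        rfl
      · rw [twoTermHomMkF_zero φ n K v w h h']
        show 0 ≫ _ = twoTermD φ n i j ≫ _
        rw [twoTermD_eq_zero φ (by tauto), zero_comp, zero_comp]
/-- degree-`n` component of a morphism from a two-term complex -/
noncomputable def ttV (α : twoTerm φ n ⟶ K) : F ⟶ K.X n :=
  eqToHom (twoTermX_self F G n).symm ≫ α.f n

/-- degree-`n-1` component of a morphism from a two-term complex -/
noncomputable def ttW (α : twoTerm φ n ⟶ K) : G ⟶ K.X (n - 1) :=
  eqToHom (twoTermX_pred F G n).symm ≫ α.f (n - 1)

lemma ttW_cycle (α : twoTerm φ n ⟶ K) : ttW α ≫ K.d (n - 1) (n - 2) = 0 := by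
  have h := α.comm (n - 1) (n - 1 - 1)
  have hz : (twoTerm φ n).d (n-1) (n-1-1) = 0 := twoTermD_eq_zero φ (by omega)
  rw [hz, zero_comp] at h
  rw [← d_index_congr K (by omega : n - 1 - 1 = n - 2) (ttW α)]
  simp [ttW, Category.assoc, h]
  erw [Category.assoc, h, comp_zero]

lemma ttV_d (α : twoTerm φ n ⟶ K) : ttV α ≫ K.d n (n - 1) = φ ≫ ttW α := by
  have h := α.comm n (n - 1)
  have hd : (twoTerm φ n).d n (n-1) = twoTermD φ n n (n-1) := rfl
  rw [hd, twoTermD_self] at h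
  simp only [ttV, ttW, Category.assoc, h, eqToHom_trans_assoc, eqToHom_refl,
    Category.id_comp]
  erw [Category.assoc, h]
  erw [Category.assoc, eqToHom_trans_assoc, eqToHom_refl, Category.id_comp, Category.assoc]
  rfl

lemma ttV_comp (α : twoTerm φ n ⟶ K) (g : K ⟶ K') : ttV (α ≫ g) = ttV α ≫ g.f n := by
  simp [ttV]
  exact (Category.assoc _ _ _).symm

lemma ttW_comp (α : twoTerm φ n ⟶ K) (g : K ⟶ K') :
    ttW (α ≫ g) = ttW α ≫ g.f (n - 1) := by
  simp [ttW]
  exact (Category.assoc _ _ _).symm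

lemma ttV_mk (v : F ⟶ K.X n) (w : G ⟶ K.X (n - 1)) (hw) (hv) :
    ttV (twoTermHomMk φ n K v w hw hv) = v := by
  rw [ttV]
  show eqToHom _ ≫ twoTermHomMkF φ n K v w n = v
  rw [twoTermHomMkF_self]
  simp

lemma ttW_mk (v : F ⟶ K.X n) (w : G ⟶ K.X (n - 1)) (hw) (hv) :
    ttW (twoTermHomMk φ n K v w hw hv) = w := by
  rw [ttW]
  show eqToHom _ ≫ twoTermHomMkF φ n K v w (n - 1) = w
  rw [twoTermHomMkF_pred]
  simp

lemma twoTermHom_ext (α β : twoTerm φ n ⟶ K) (hV : ttV α = ttV β)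
    (hW : ttW α = ttW β) : α = β := by
  apply HomologicalComplex.hom_ext
  intro i
  by_cases h : i = n
  · obtain rfl : n = i := h.symm
    have := congrArg (fun t => eqToHom (twoTermX_self F G n) ≫ t) hV
    unfold ttV at hV
    exact (cancel_epi (eqToHom (twoTermX_self F G n).symm)).1 hV
  · by_cases h' : i = n - 1
    · obtain rfl : n - 1 = i := h'.symm
      have := congrArg (fun t => eqToHom (twoTermX_pred F G n) ≫ t) hW
      unfold ttW at hW
      exact (cancel_epi (eqToHom (twoTermX_pred F G n).symm)).1 hW
    · exact (twoTermX_isZero F G h h').eq_of_src _ _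

lemma boundaryHom_ext (α β : twoTerm (0 : (0 : A) ⟶ F ⊞ F) n ⟶ K)
    (hW : ttW α = ttW β) : α = β := by
  apply twoTermHom_ext _ _ _ hW
  apply (isZero_zero A).eq_of_src

lemma ttW_boundary_comp (α : twoTerm (biprod.lift (𝟙 F) (-𝟙 F)) n ⟶ K) :
    ttW (boundaryToSimplex (F := F) n ≫ α) = ttW α := by
  rw [ttW, ttW]
  show eqToHom _ ≫ (boundaryToSimplex (F := F) n).f (n-1) ≫ α.f (n-1) = _
  show eqToHom _ ≫ twoTermMapF 0 (𝟙 (F ⊞ F)) n (n-1) ≫ α.f (n-1) = _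
  rw [twoTermMapF_pred]
  simp
  erw [← Category.assoc, eqToHom_trans]

end TwoTermHomAPI

section LiftingIff

variable {F : A} {K K' : ChainComplex A ℤ}

lemma hasLiftingProperty_boundaryToSimplex_iff (n : ℤ) (f : K ⟶ K') :
    HasLiftingProperty (boundaryToSimplex (F := F) n) f ↔
      ∀ (z : F ⟶ K.X (n - 1)), z ≫ K.d (n - 1) (n - 2) = 0 →
        ∀ v : F ⟶ K'.X n, v ≫ K'.d n (n - 1) = z ≫ f.f (n - 1) →
          ∃ v', v' ≫ f.f n = v ∧ v' ≫ K.d n (n - 1) = z := by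
  constructor
  · intro hlp z hz v hv
    set u : F ⊞ F ⟶ K.X (n - 1) := biprod.desc z 0 with hu
    have hud : u ≫ K.d (n - 1) (n - 2) = 0 := by
      apply biprod.hom_ext' <;> simp [hu, hz]
    have hlu : biprod.lift (𝟙 F) (-𝟙 F) ≫ u = z := by simp [hu]
    have hwf : (u ≫ f.f (n - 1)) ≫ K'.d (n - 1) (n - 2) = 0 := by
      rw [Category.assoc, f.comm, ← Category.assoc, hud, zero_comp]
    have hvf : v ≫ K'.d n (n - 1) = biprod.lift (𝟙 F) (-𝟙 F) ≫ u ≫ f.f (n - 1) := by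
      rw [hv, ← hlu]; simp
    let top : twoTerm (0 : (0 : A) ⟶ F ⊞ F) n ⟶ K :=
      twoTermHomMk _ n K 0 u hud (by simp)
    let bot : twoTerm (biprod.lift (𝟙 F) (-𝟙 F)) n ⟶ K' :=
      twoTermHomMk _ n K' v (u ≫ f.f (n - 1)) hwf hvf
    have sq : CommSq top (boundaryToSimplex (F := F) n) f bot := by
      constructor
      apply boundaryHom_ext
      rw [ttW_comp, ttW_boundary_comp]
      show ttW top ≫ f.f (n-1) = ttW bot
      rw [ttW_mk, ttW_mk]
    have := hlp.sq_hasLift sq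
    obtain ⟨⟨l, hl1, hl2⟩⟩ := this.exists_lift
    refine ⟨ttV l, ?_, ?_⟩
    · rw [← ttV_comp, hl2, ttV_mk]
    · rw [ttV_d l, ← hlu]
      congr 1
      have := congrArg ttW hl1
      rwa [ttW_boundary_comp, ttW_mk] at this
  · intro hE
    constructor
    intro top bot sq
    have hu : ttW top ≫ K.d (n - 1) (n - 2) = 0 := ttW_cycle top
    have hsq : ttW top ≫ f.f (n - 1) = ttW bot := by
      have := congrArg ttW sq.w
      rwa [ttW_comp, ttW_boundary_comp] at this
    have hz : (biprod.lift (𝟙 F) (-𝟙 F) ≫ ttW top) ≫ K.d (n - 1) (n - 2) = 0 := by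
      rw [Category.assoc, hu, comp_zero]
    have hv : ttV bot ≫ K'.d n (n - 1) =
        (biprod.lift (𝟙 F) (-𝟙 F) ≫ ttW top) ≫ f.f (n - 1) := by
      rw [ttV_d bot, ← hsq]; simp
    obtain ⟨v', hv'f, hv'd⟩ := hE _ hz _ hv
    constructor
    refine ⟨⟨twoTermHomMk _ n K v' (ttW top) hu hv'd, ?_, ?_⟩⟩
    · apply boundaryHom_ext
      rw [ttW_boundary_comp, ttW_mk]
    · apply twoTermHom_ext
      · rw [ttV_comp, ttV_mk, hv'f]
      · rw [ttW_comp, ttW_mk, hsq]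

end LiftingIff


section Core

variable {𝒜 : Type*} [Category 𝒜] [Abelian 𝒜]

lemma down_next (n : ℤ) : (ComplexShape.down ℤ).next n = n - 1 := by
  apply ComplexShape.next_eq'; simp only [ComplexShape.down_Rel]; omega

lemma down_prev (n : ℤ) : (ComplexShape.down ℤ).prev n = n + 1 := by
  apply ComplexShape.prev_eq'; simp only [ComplexShape.down_Rel]

omit [Abelian 𝒜] in
lemma comp_d_all [Preadditive 𝒜] {K : ChainComplex 𝒜 ℤ} {X : 𝒜} {i j₀ : ℤ} (h₀ : j₀ + 1 = i)
    {z : X ⟶ K.X i} (hz : z ≫ K.d i j₀ = 0) (j : ℤ) : z ≫ K.d i j = 0 := by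
  by_cases hj : j + 1 = i
  · obtain rfl : j₀ = j := by omega
    exact hz
  · rw [K.shape i j (by simpa [ComplexShape.down_Rel] using hj), comp_zero]

lemma liftCycles_congr (K : ChainComplex 𝒜 ℤ) {X : 𝒜} {i : ℤ} {z₁ z₂ : X ⟶ K.X i}
    (hzz : z₁ = z₂) (j₁ j₂ : ℤ) (hj₁ : (ComplexShape.down ℤ).next i = j₁)
    (hj₂ : (ComplexShape.down ℤ).next i = j₂) (hz₁ : z₁ ≫ K.d i j₁ = 0)
    (hz₂ : z₂ ≫ K.d i j₂ = 0) :
    K.liftCycles z₁ j₁ hj₁ hz₁ = K.liftCycles z₂ j₂ hj₂ hz₂ := by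
  rw [← cancel_mono (K.iCycles i)]
  simp [hzz]

omit [Abelian 𝒜] in
lemma epi_of_rep_factors [Preadditive 𝒜] {ι : Type*} {P : ι → 𝒜}
    (hsep : ∀ ⦃X Y : 𝒜⦄ (h : X ⟶ Y), (∀ i (φ : P i ⟶ X), φ ≫ h = 0) → h = 0)
    {X Y : 𝒜} (g : X ⟶ Y)
    (h : ∀ i (φ : P i ⟶ Y), ∃ ψ, ψ ≫ g = φ) : Epi g := by
  rw [Preadditive.epi_iff_cancel_zero]
  intro Z h0 hg0
  apply hsep
  intro i φ
  obtain ⟨ψ, hψ⟩ := h i φ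
  rw [← hψ, Category.assoc, hg0, comp_zero]

lemma proj_comp_eq {Q X Y : 𝒜} (_ : Projective Q) {g : X ⟶ Y} {γ : Q ⟶ Y}
    (h : ∃ (A' : 𝒜) (π : A' ⟶ Q) (_ : Epi π) (x : A' ⟶ X), π ≫ γ = x ≫ g) :
    ∃ x', x' ≫ g = γ := by
  obtain ⟨A', π, hπ, x, hx⟩ := h
  obtain ⟨σ, hσ⟩ := Projective.factors (𝟙 Q) π
  exact ⟨σ ≫ x, by rw [Category.assoc, ← hx, ← Category.assoc, hσ, Category.id_comp]⟩

lemma exists_cycle_rep {Q : 𝒜} (hQ : Projective Q) (K : ChainComplex 𝒜 ℤ) (n : ℤ)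
    (γ : Q ⟶ K.homology n) :
    ∃ (s : Q ⟶ K.X n) (hs : s ≫ K.d n (n - 1) = 0),
      γ = K.liftCycles s (n - 1) (down_next n) hs ≫ K.homologyπ n := by
  obtain ⟨A', π, hπ, z, hz, hrep⟩ :=
    K.eq_liftCycles_homologyπ_up_to_refinements γ (n - 1) (down_next n)
  obtain ⟨σ, hσ⟩ := Projective.factors (𝟙 Q) π
  refine ⟨σ ≫ z, by rw [Category.assoc, hz, comp_zero], ?_⟩
  rw [← Category.id_comp γ, ← hσ, Category.assoc, hrep,
    K.comp_liftCycles_assoc]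

lemma exists_boundary {Q : 𝒜} (hQ : Projective Q) (K : ChainComplex 𝒜 ℤ) (a b : ℤ)
    (hab : b + 1 = a) (z : Q ⟶ K.X b) {j : ℤ} {hj : (ComplexShape.down ℤ).next b = j}
    {hz : z ≫ K.d b j = 0}
    (h0 : K.liftCycles z j hj hz ≫ K.homologyπ b = 0) :
    ∃ t : Q ⟶ K.X a, t ≫ K.d a b = z := by
  obtain rfl : a = b + 1 := by omega
  have hex : (ShortComplex.mk (K.toCycles (b + 1) b) (K.homologyπ b)
      (K.toCycles_comp_homologyπ (b + 1) b)).Exact :=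
    ShortComplex.exact_of_g_is_cokernel _ (K.homologyIsCokernel (b + 1) b (down_prev b))
  obtain ⟨A', π, hπ, x₁, hx₁⟩ := hex.exact_up_to_refinements
    (K.liftCycles z j hj hz) h0
  obtain ⟨σ, hσ⟩ := Projective.factors (𝟙 Q) π
  refine ⟨σ ≫ x₁, ?_⟩
  have := congrArg (fun t => σ ≫ t ≫ K.iCycles b) hx₁
  simp only [Category.assoc, HomologicalComplex.liftCycles_i,
    HomologicalComplex.toCycles_i] at this
  rw [Category.assoc, ← this, ← Category.assoc, hσ, Category.id_comp]

end Core

section CoreMain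

variable {𝒜 : Type*} [Category 𝒜] [Abelian 𝒜] {ι : Type*}

lemma core_forward (P : ι → 𝒜) (hP : ∀ i, Projective (P i))
    {K K' : ChainComplex 𝒜 ℤ} (f : K ⟶ K')
    (hepi : ∀ n : ℤ, Epi (f.f n)) (hq : QuasiIso f) :
    ∀ (n : ℤ) (i : ι) (z : P i ⟶ K.X (n - 1)), z ≫ K.d (n - 1) (n - 2) = 0 →
      ∀ v : P i ⟶ K'.X n, v ≫ K'.d n (n - 1) = z ≫ f.f (n - 1) →
        ∃ v', v' ≫ f.f n = v ∧ v' ≫ K.d n (n - 1) = z := by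
  intro n i z hz v hv
  haveI h1 : IsIso (HomologicalComplex.homologyMap f (n - 1)) := by
    rw [← quasiIsoAt_iff_isIso_homologyMap]; infer_instance
  haveI h2 : IsIso (HomologicalComplex.homologyMap f n) := by
    rw [← quasiIsoAt_iff_isIso_homologyMap]; infer_instance
  have hnext : (ComplexShape.down ℤ).next (n - 1) = n - 2 := by rw [down_next]; omega
  -- `z ≫ f` is a boundary, hence `[z] ↦ 0`, hence `z` is a boundary by injectivity
  have hb0 : (K.liftCycles z (n - 2) hnext hz ≫ K.homologyπ (n - 1)) ≫
      HomologicalComplex.homologyMap f (n - 1) = 0 := by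
    rw [Category.assoc, HomologicalComplex.homologyπ_naturality,
      ← Category.assoc, HomologicalComplex.liftCycles_comp_cyclesMap]
    exact K'.liftCycles_homologyπ_eq_zero_of_boundary (z ≫ f.f (n - 1)) (n - 2) hnext v hv.symm
  have hz0 : K.liftCycles z (n - 2) hnext hz ≫ K.homologyπ (n - 1) = 0 :=
    (cancel_mono (HomologicalComplex.homologyMap f (n - 1))).1 (by rw [hb0, zero_comp])
  obtain ⟨w, hw⟩ := exists_boundary (hP i) K n (n - 1) (by omega) z hz0
  -- the corrected cycle
  have hcycd : (v - w ≫ f.f n) ≫ K'.d n (n - 1) = 0 := by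
    rw [Preadditive.sub_comp, hv, Category.assoc, f.comm, ← Category.assoc, hw, sub_self]
  -- surjectivity of homology
  obtain ⟨γ, hγ⟩ := proj_comp_eq (hP i)
    (surjective_up_to_refinements_of_epi (HomologicalComplex.homologyMap f n)
      (K'.liftCycles (v - w ≫ f.f n) (n - 1) (down_next n) hcycd ≫ K'.homologyπ n))
  obtain ⟨s, hs, hγrep⟩ := exists_cycle_rep (hP i) K n γ
  have hsf : (s ≫ f.f n) ≫ K'.d n (n - 1) = 0 := by
    rw [Category.assoc, f.comm, ← Category.assoc, hs, zero_comp]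
  have e1 : K'.liftCycles (s ≫ f.f n) (n - 1) (down_next n) hsf ≫ K'.homologyπ n =
      K'.liftCycles (v - w ≫ f.f n) (n - 1) (down_next n) hcycd ≫ K'.homologyπ n := by
    rw [← hγ, hγrep, Category.assoc, HomologicalComplex.homologyπ_naturality,
      ← Category.assoc, HomologicalComplex.liftCycles_comp_cyclesMap]
  have hsub : (s ≫ f.f n - (v - w ≫ f.f n)) ≫ K'.d n (n - 1) = 0 := by
    rw [Preadditive.sub_comp, hsf, hcycd, sub_self]
  have key : K'.liftCycles (s ≫ f.f n - (v - w ≫ f.f n)) (n - 1) (down_next n) hsub ≫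
      K'.homologyπ n = 0 := by
    have hdiff : K'.liftCycles (s ≫ f.f n - (v - w ≫ f.f n)) (n - 1) (down_next n) hsub =
        K'.liftCycles (s ≫ f.f n) (n - 1) (down_next n) hsf -
        K'.liftCycles (v - w ≫ f.f n) (n - 1) (down_next n) hcycd := by
      rw [← cancel_mono (K'.iCycles n)]
      simp
    rw [hdiff, Preadditive.sub_comp, e1, sub_self]
  obtain ⟨t, ht⟩ := exists_boundary (hP i) K' (n + 1) n rfl _ key
  haveI := hepi (n + 1)
  haveI := hP i
  obtain ⟨t', ht'⟩ := Projective.factors t (f.f (n + 1))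
  refine ⟨w + s - t' ≫ K.d (n + 1) n, ?_, ?_⟩
  · have hcomm : (t' ≫ K.d (n + 1) n) ≫ f.f n = t ≫ K'.d (n + 1) n := by
      rw [Category.assoc, ← f.comm, ← Category.assoc, ht']
    rw [Preadditive.sub_comp, Preadditive.add_comp, hcomm, ht]
    abel
  · rw [Preadditive.sub_comp, Preadditive.add_comp, Category.assoc,
      HomologicalComplex.d_comp_d, comp_zero, hw, hs]
    abel

lemma core_backward (P : ι → 𝒜) (hP : ∀ i, Projective (P i))
    (hsep : ∀ ⦃X Y : 𝒜⦄ (h : X ⟶ Y), (∀ i (φ : P i ⟶ X), φ ≫ h = 0) → h = 0)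
    {K K' : ChainComplex 𝒜 ℤ} (f : K ⟶ K')
    (hE : ∀ (n : ℤ) (i : ι) (z : P i ⟶ K.X (n - 1)), z ≫ K.d (n - 1) (n - 2) = 0 →
      ∀ v : P i ⟶ K'.X n, v ≫ K'.d n (n - 1) = z ≫ f.f (n - 1) →
        ∃ v', v' ≫ f.f n = v ∧ v' ≫ K.d n (n - 1) = z) :
    (∀ n : ℤ, Epi (f.f n)) ∧ QuasiIso f := by
  have hE' : ∀ (a b : ℤ), b + 1 = a → ∀ (i : ι) (z : P i ⟶ K.X b),
      (∀ m, z ≫ K.d b m = 0) → ∀ v : P i ⟶ K'.X a, v ≫ K'.d a b = z ≫ f.f b →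
        ∃ v', v' ≫ f.f a = v ∧ v' ≫ K.d a b = z := by
    intro a b hab
    obtain rfl : b = a - 1 := by omega
    intro i z hz v hv
    exact hE a i z (hz (a - 2)) v hv
  have hcyc : ∀ (a : ℤ) (i : ι) (v : P i ⟶ K'.X a), (∀ m, v ≫ K'.d a m = 0) →
      ∃ v', v' ≫ f.f a = v ∧ ∀ m, v' ≫ K.d a m = 0 := by
    intro a i v hv
    obtain ⟨v', hv1, hv2⟩ := hE' a (a - 1) (by omega) i 0 (fun m => zero_comp)
      v (by rw [hv (a - 1), zero_comp])
    exact ⟨v', hv1, comp_d_all (by omega) hv2⟩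
  have hepi : ∀ n : ℤ, Epi (f.f n) := by
    intro n
    apply epi_of_rep_factors hsep
    intro i φ
    have hb : ∀ m, (φ ≫ K'.d n (n - 1)) ≫ K'.d (n - 1) m = 0 := fun m => by
      rw [Category.assoc, HomologicalComplex.d_comp_d, comp_zero]
    obtain ⟨zc, hzc, hzcyc⟩ := hcyc (n - 1) i (φ ≫ K'.d n (n - 1)) hb
    obtain ⟨v', hv1, _⟩ := hE' n (n - 1) (by omega) i zc hzcyc φ hzc.symm
    exact ⟨v', hv1⟩
  refine ⟨hepi, ?_⟩
  rw [quasiIso_iff]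
  intro n
  rw [quasiIsoAt_iff_isIso_homologyMap]
  haveI hm : Mono (HomologicalComplex.homologyMap f n) := by
    rw [Preadditive.mono_iff_cancel_zero]
    intro T y hy
    apply hsep
    intro i φ
    obtain ⟨s, hs, hrep⟩ := exists_cycle_rep (hP i) K n (φ ≫ y)
    have hsf : (s ≫ f.f n) ≫ K'.d n (n - 1) = 0 := by
      rw [Category.assoc, f.comm, ← Category.assoc, hs, zero_comp]
    have h0 : K'.liftCycles (s ≫ f.f n) (n - 1) (down_next n) hsf ≫ K'.homologyπ n = 0 := by
      have h00 : (φ ≫ y) ≫ HomologicalComplex.homologyMap f n = 0 := by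
        rw [Category.assoc, hy, comp_zero]
      rw [hrep, Category.assoc, HomologicalComplex.homologyπ_naturality,
        ← Category.assoc, HomologicalComplex.liftCycles_comp_cyclesMap] at h00
      exact h00
    obtain ⟨t, ht⟩ := exists_boundary (hP i) K' (n + 1) n rfl _ h0
    obtain ⟨v', hv1, hv2⟩ := hE' (n + 1) n rfl i s (comp_d_all (by omega) hs) t ht
    rw [hrep]
    exact K.liftCycles_homologyπ_eq_zero_of_boundary s (n - 1) (down_next n) v' hv2.symm
  haveI he : Epi (HomologicalComplex.homologyMap f n) := by
    apply epi_of_rep_factors hsep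
    intro i y
    obtain ⟨z', hz', hyrep⟩ := exists_cycle_rep (hP i) K' n y
    obtain ⟨v', hvf, hvc⟩ := hcyc n i z' (comp_d_all (by omega) hz')
    refine ⟨K.liftCycles v' (n - 1) (down_next n) (hvc (n - 1)) ≫ K.homologyπ n, ?_⟩
    rw [Category.assoc, HomologicalComplex.homologyπ_naturality,
      ← Category.assoc, HomologicalComplex.liftCycles_comp_cyclesMap, hyrep]
    exact congrArg (· ≫ K'.homologyπ n) (liftCycles_congr K' hvf _ _ _ _ _ _)
  exact isIso_of_mono_of_epi _

end CoreMain

noncomputable def repHomEquiv (c : C) (G : PSh Λ C) :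
    (representableΛ Λ C c ⟶ G) ≃ G.obj (Opposite.op c) :=
  (((ModuleCat.adj Λ).whiskerRight Cᵒᵖ).homEquiv (yoneda.obj c) G).trans yonedaEquiv

lemma repHomEquiv_comp {c : C} {G G' : PSh Λ C} (φ : representableΛ Λ C c ⟶ G) (h : G ⟶ G') :
    repHomEquiv Λ C c G' (φ ≫ h) = h.app (Opposite.op c) (repHomEquiv Λ C c G φ) := by
  simp only [repHomEquiv, Equiv.trans_apply, Adjunction.homEquiv_naturality_right,
    yonedaEquiv_comp]
  rfl

lemma repHomEquiv_zero {c : C} {G : PSh Λ C} :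
    repHomEquiv Λ C c G (0 : representableΛ Λ C c ⟶ G) = 0 := by
  have := repHomEquiv_comp Λ C (c := c) (G := G) (G' := G) 0 0
  rw [comp_zero] at this
  rw [this]
  rfl

instance rep_projective (c : C) : Projective (representableΛ Λ C c) where
  factors {E X} f e he := by
    have : Epi (e.app (Opposite.op c)) := inferInstance
    obtain ⟨x, hx⟩ := (ModuleCat.epi_iff_surjective _).1 this (repHomEquiv Λ C c X f)
    refine ⟨(repHomEquiv Λ C c E).symm x, (repHomEquiv Λ C c X).injective ?_⟩
    rw [repHomEquiv_comp, Equiv.apply_symm_apply, hx]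

lemma rep_separating {X Y : PSh Λ C} (h : X ⟶ Y)
    (hh : ∀ (c : C) (φ : representableΛ Λ C c ⟶ X), φ ≫ h = 0) : h = 0 := by
  ext cop x
  have := repHomEquiv_comp Λ C ((repHomEquiv Λ C cop.unop X).symm x) h
  rw [hh, Equiv.apply_symm_apply, repHomEquiv_zero] at this
  exact this.symm

/-- A morphism of unbounded chain complexes of presheaves of
`Λ`-modules is a degreewise epimorphism and a quasi-isomorphism if and only if it
has the right lifting property with respect to the set `I'` of morphisms
`∂ΔⁿΛ(c) ⟶ ΔⁿΛ(c)`. -/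
theorem trivialFibration_iff_rlp_I'
    {K K' : ChainComplex (PSh Λ C) ℤ} (f : K ⟶ K') :
    ((∀ n : ℤ, Epi (f.f n)) ∧ QuasiIso f) ↔
      ∀ (n : ℤ) (c : C),
        HasLiftingProperty (boundaryToSimplex (F := representableΛ Λ C c) n) f := by
  constructor
  · rintro ⟨hepi, hq⟩ n c
    rw [hasLiftingProperty_boundaryToSimplex_iff]
    intro z hz v hv
    exact core_forward (fun c : C => representableΛ Λ C c)
      (fun c => rep_projective Λ C c) f hepi hq n c z hz v hv
  · intro h
    apply core_backward (fun c : C => representableΛ Λ C c)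
      (fun c => rep_projective Λ C c) (fun X Y g hg => rep_separating Λ C g hg) f
    intro n c z hz v hv
    exact (hasLiftingProperty_boundaryToSimplex_iff n f).1 (h n c) z hz v hv
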